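/- For every partition polynomial P there exists a clopen subset A of the Cantor set Ω = {0,1}^ℕ such that μ_r(A) = P(r) for all r ∈ [0,1]. -/

import Mathlib

open MeasureTheory Polynomial

/-- `P` is a partition polynomial: `P(X) = ∑_{i=0}^n a_i X^i (1-X)^(n-i)` with
integers `0 ≤ a_i ≤ C(n,i)`. -/
def IsPartitionPolynomial (P : Polynomial ℤ) : Prop :=
  ∃ (n : ℕ) (a : ℕ → ℤ),
    (∀ i ≤ n, 0 ≤ a i ∧ a i ≤ (n.choose i : ℤ)) ∧
    P = ∑ i ∈ Finset.range (n + 1), C (a i) * X ^ i * (1 - X) ^ (n - i)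

/-- `μ` is the Bernoulli(`r`) product measure on the Cantor set `ℕ → Bool`:
every cylinder specifying the coordinates in a finite set `s` to agree with `e`
has measure `r^(#1s) * (1-r)^(#0s)`.  (This characterizes the infinite power of
the `(r, 1-r)` measure on `{0,1}` uniquely among Borel measures.) -/
def IsBernoulli (r : ℝ) (μ : Measure (ℕ → Bool)) : Prop :=
  ∀ (s : Finset ℕ) (e : ℕ → Bool),
    μ {x : ℕ → Bool | ∀ i ∈ s, x i = e i} =
      ENNReal.ofReal (r ^ (s.filter fun i => e i = true).card *
        (1 - r) ^ (s.filter fun i => e i = false).card)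

/-- The cylinder set determined by `s ⊆ range n`. -/
def Cyl (n : ℕ) (s : Finset ℕ) : Set (ℕ → Bool) :=
  {x : ℕ → Bool | ∀ i ∈ Finset.range n, x i = decide (i ∈ s)}

lemma cyl_eq (n : ℕ) (s : Finset ℕ) :
    Cyl n s = ⋂ j ∈ Finset.range n, (fun x : ℕ → Bool => x j) ⁻¹' {decide (j ∈ s)} := by
  ext x; simp [Cyl]

lemma isClopen_cyl (n : ℕ) (s : Finset ℕ) : IsClopen (Cyl n s) := by
  rw [cyl_eq]
  exact (Finset.range n).finite_toSet.isClopen_biInter fun j _ =>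
    (isClopen_discrete _).preimage (continuous_apply j)

lemma measurableSet_cyl (n : ℕ) (s : Finset ℕ) : MeasurableSet (Cyl n s) := by
  rw [cyl_eq]
  exact MeasurableSet.biInter (Finset.range n).countable_toSet fun j _ =>
    (measurable_pi_apply j) (MeasurableSet.singleton _)

lemma cyl_disjoint {n : ℕ} {s t : Finset ℕ} (hs : s ⊆ Finset.range n)
    (ht : t ⊆ Finset.range n) (hst : s ≠ t) : Disjoint (Cyl n s) (Cyl n t) := by
  rw [Set.disjoint_left]
  intro x hxs hxt
  apply hst
  ext j
  constructor
  · intro hj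
    have h1 := hxs j (hs hj)
    have h2 := hxt j (hs hj)
    rw [h1] at h2
    simpa [hj] using h2.symm
  · intro hj
    have h1 := hxs j (ht hj)
    have h2 := hxt j (ht hj)
    rw [h1] at h2
    simpa [hj] using h2

lemma measure_cyl {r : ℝ} {μ : Measure (ℕ → Bool)} (hμ : IsBernoulli r μ)
    {n : ℕ} {s : Finset ℕ} (hs : s ⊆ Finset.range n) :
    μ (Cyl n s) = ENNReal.ofReal (r ^ s.card * (1 - r) ^ (n - s.card)) := by
  have h := hμ (Finset.range n) (fun i => decide (i ∈ s))
  have h1 : (Finset.range n).filter (fun i => decide (i ∈ s) = true) = s := by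
    ext j; simp only [Finset.mem_filter, decide_eq_true_eq]
    exact ⟨fun h => h.2, fun h => ⟨hs h, h⟩⟩
  have h2 : (Finset.range n).filter (fun i => decide (i ∈ s) = false) =
      Finset.range n \ s := by
    ext j; simp [Finset.mem_sdiff]
  rw [Cyl]
  rw [h, h1, h2, Finset.card_sdiff_of_subset hs, Finset.card_range]

/-- every partition polynomial represents some clopen subset of the
Cantor set. -/
theorem exists_isClopen_of_partition_polynomial (P : Polynomial ℤ)
    (hP : IsPartitionPolynomial P) :
    ∃ A : Set (ℕ → Bool), IsClopen A ∧
      ∀ r ∈ Set.Icc (0 : ℝ) 1, ∀ μ : Measure (ℕ → Bool), IsBernoulli r μ →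
        μ A = ENNReal.ofReal (aeval r P) := by
  obtain ⟨n, a, ha, hPeq⟩ := hP
  have hchoice : ∀ i : ℕ, i ∈ Finset.range (n + 1) →
      ∃ t ⊆ Finset.powersetCard i (Finset.range n), t.card = (a i).toNat := by
    intro i hi
    apply Finset.exists_subset_card_eq
    rw [Finset.card_powersetCard, Finset.card_range]
    exact Int.toNat_le.mpr ((ha i (Finset.mem_range_succ_iff.mp hi)).2)
  choose! t htsub htcard using hchoice
  set T : Finset (Finset ℕ) := (Finset.range (n + 1)).biUnion t with hT
  -- every member of T is a subset of range n, with card determined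
  have hmem : ∀ s ∈ T, s ⊆ Finset.range n := by
    intro s hs
    rw [hT, Finset.mem_biUnion] at hs
    obtain ⟨i, hi, hsi⟩ := hs
    exact (Finset.mem_powersetCard.mp (htsub i hi hsi)).1
  refine ⟨⋃ s ∈ T, Cyl n s, ?_, ?_⟩
  · exact T.finite_toSet.isClopen_biUnion fun s _ => isClopen_cyl n s
  · intro r hr μ hμ
    have hr0 : 0 ≤ r := hr.1
    have hr1 : 0 ≤ 1 - r := by linarith [hr.2]
    have hdisj : (T : Set (Finset ℕ)).PairwiseDisjoint (Cyl n) := by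
      intro s hs u hu hsu
      exact cyl_disjoint (hmem s hs) (hmem u hu) hsu
    rw [measure_biUnion_finset hdisj fun s _ => measurableSet_cyl n s]
    have hsum : ∀ s ∈ T, μ (Cyl n s) =
        ENNReal.ofReal (r ^ s.card * (1 - r) ^ (n - s.card)) := fun s hs =>
      measure_cyl hμ (hmem s hs)
    rw [Finset.sum_congr rfl hsum]
    have htd : (↑(Finset.range (n + 1)) : Set ℕ).PairwiseDisjoint t := by
      intro i hi j hj hij
      simp only [Finset.disjoint_left]
      intro s hsi hsj
      have h1 := (Finset.mem_powersetCard.mp (htsub i hi hsi)).2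
      have h2 := (Finset.mem_powersetCard.mp (htsub j hj hsj)).2
      exact hij (h1 ▸ h2 ▸ rfl)
    rw [hT, Finset.sum_biUnion htd]
    have hinner : ∀ i ∈ Finset.range (n + 1),
        ∑ s ∈ t i, ENNReal.ofReal (r ^ s.card * (1 - r) ^ (n - s.card)) =
          (a i).toNat * ENNReal.ofReal (r ^ i * (1 - r) ^ (n - i)) := by
      intro i hi
      rw [Finset.sum_congr rfl (fun s hs => by
        rw [(Finset.mem_powersetCard.mp (htsub i hi hs)).2])]
      rw [Finset.sum_const, htcard i hi, nsmul_eq_mul]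
    rw [Finset.sum_congr rfl hinner]
    have haeval : (aeval r) P =
        ∑ i ∈ Finset.range (n + 1), (a i : ℝ) * (r ^ i * (1 - r) ^ (n - i)) := by
      rw [hPeq, map_sum]
      refine Finset.sum_congr rfl fun i _ => ?_
      simp [mul_assoc]
    rw [haeval, ENNReal.ofReal_sum_of_nonneg]
    · refine Finset.sum_congr rfl fun i hi => ?_
      have hai : ((a i).toNat : ℝ) = (a i : ℝ) := by
        exact_mod_cast Int.toNat_of_nonneg (ha i (Finset.mem_range_succ_iff.mp hi)).1
      rw [← hai,
        ENNReal.ofReal_mul (show (0:ℝ) ≤ ((a i).toNat : ℝ) by positivity),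
        ENNReal.ofReal_natCast]
    · intro i hi
      have h0 : (0:ℝ) ≤ (a i : ℝ) := by
        exact_mod_cast (ha i (Finset.mem_range_succ_iff.mp hi)).1
      positivity
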